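/- Let A_I = A_O = B_I = B_O = ℂ². The set W^CNS of causally non-separable process matrices on A_I⊗A_O⊗B_I⊗B_O is not convex: there exist causally non-separable process matrices whose convex combination is a causally separable process matrix. -/

import Mathlib

open scoped ComplexOrder Matrix

namespace ProcessMatrices

/-- The trace norm (sum of singular values) of a complex square matrix. -/
noncomputable def traceNorm {n : Type} [Fintype n] [DecidableEq n] (X : Matrix n n ℂ) : ℝ :=
  ∑ i, Real.sqrt ((Matrix.posSemidef_conjTranspose_mul_self X).isHermitian.eigenvalues i)

variable {aI aO bI bO : Type} [Fintype aI] [Fintype aO] [Fintype bI] [Fintype bO]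
  [DecidableEq aI] [DecidableEq aO] [DecidableEq bI] [DecidableEq bO]
  [Nonempty aI] [Nonempty aO] [Nonempty bI] [Nonempty bO]

/-- `_{A_O} W = (1_{A_O}/dim A_O) ⊗ tr_{A_O} W`, as an operator on the full space. -/
noncomputable def rAO (W : Matrix (aI × aO × bI × bO) (aI × aO × bI × bO) ℂ) :
    Matrix (aI × aO × bI × bO) (aI × aO × bI × bO) ℂ := fun i j =>
  (if i.2.1 = j.2.1 then ((Fintype.card aO : ℂ))⁻¹ else 0) *
    ∑ k : aO, W (i.1, k, i.2.2.1, i.2.2.2) (j.1, k, j.2.2.1, j.2.2.2)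

/-- `_{B_O} W`. -/
noncomputable def rBO (W : Matrix (aI × aO × bI × bO) (aI × aO × bI × bO) ℂ) :
    Matrix (aI × aO × bI × bO) (aI × aO × bI × bO) ℂ := fun i j =>
  (if i.2.2.2 = j.2.2.2 then ((Fintype.card bO : ℂ))⁻¹ else 0) *
    ∑ k : bO, W (i.1, i.2.1, i.2.2.1, k) (j.1, j.2.1, j.2.2.1, k)

/-- `_{A_O B_O} W`. -/
noncomputable def rAOBO (W : Matrix (aI × aO × bI × bO) (aI × aO × bI × bO) ℂ) :
    Matrix (aI × aO × bI × bO) (aI × aO × bI × bO) ℂ := fun i j =>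
  (if i.2.1 = j.2.1 ∧ i.2.2.2 = j.2.2.2 then
      ((Fintype.card aO : ℂ) * (Fintype.card bO : ℂ))⁻¹ else 0) *
    ∑ k : aO, ∑ l : bO, W (i.1, k, i.2.2.1, l) (j.1, k, j.2.2.1, l)

/-- `_{A_I A_O} W`. -/
noncomputable def rAIAO (W : Matrix (aI × aO × bI × bO) (aI × aO × bI × bO) ℂ) :
    Matrix (aI × aO × bI × bO) (aI × aO × bI × bO) ℂ := fun i j =>
  (if i.1 = j.1 ∧ i.2.1 = j.2.1 then
      ((Fintype.card aI : ℂ) * (Fintype.card aO : ℂ))⁻¹ else 0) *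
    ∑ k : aI, ∑ l : aO, W (k, l, i.2.2.1, i.2.2.2) (k, l, j.2.2.1, j.2.2.2)

/-- `_{B_I B_O} W`. -/
noncomputable def rBIBO (W : Matrix (aI × aO × bI × bO) (aI × aO × bI × bO) ℂ) :
    Matrix (aI × aO × bI × bO) (aI × aO × bI × bO) ℂ := fun i j =>
  (if i.2.2.1 = j.2.2.1 ∧ i.2.2.2 = j.2.2.2 then
      ((Fintype.card bI : ℂ) * (Fintype.card bO : ℂ))⁻¹ else 0) *
    ∑ k : bI, ∑ l : bO, W (i.1, i.2.1, k, l) (j.1, j.2.1, k, l)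

/-- `_{A_I A_O B_O} W`. -/
noncomputable def rAIAOBO (W : Matrix (aI × aO × bI × bO) (aI × aO × bI × bO) ℂ) :
    Matrix (aI × aO × bI × bO) (aI × aO × bI × bO) ℂ := fun i j =>
  (if i.1 = j.1 ∧ i.2.1 = j.2.1 ∧ i.2.2.2 = j.2.2.2 then
      ((Fintype.card aI : ℂ) * (Fintype.card aO : ℂ) * (Fintype.card bO : ℂ))⁻¹ else 0) *
    ∑ k : aI, ∑ l : aO, ∑ m : bO, W (k, l, i.2.2.1, m) (k, l, j.2.2.1, m)

/-- `_{A_O B_I B_O} W`. -/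
noncomputable def rAOBIBO (W : Matrix (aI × aO × bI × bO) (aI × aO × bI × bO) ℂ) :
    Matrix (aI × aO × bI × bO) (aI × aO × bI × bO) ℂ := fun i j =>
  (if i.2.1 = j.2.1 ∧ i.2.2.1 = j.2.2.1 ∧ i.2.2.2 = j.2.2.2 then
      ((Fintype.card aO : ℂ) * (Fintype.card bI : ℂ) * (Fintype.card bO : ℂ))⁻¹ else 0) *
    ∑ k : aO, ∑ l : bI, ∑ m : bO, W (i.1, k, l, m) (j.1, k, l, m)

/-- `W` is a process matrix. -/
structure IsProcessMatrix (W : Matrix (aI × aO × bI × bO) (aI × aO × bI × bO) ℂ) : Prop where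
  posSemidef : W.PosSemidef
  condA : rAIAO W = rAIAOBO W
  condB : rBIBO W = rAOBIBO W
  condAB : W = rBO W + rAO W - rAOBO W
  traceEq : W.trace = (Fintype.card aO : ℂ) * (Fintype.card bO : ℂ)

/-- Partial trace over `A_O`. -/
noncomputable def ptrAO (N : Matrix (aI × aO × bI × bO) (aI × aO × bI × bO) ℂ) :
    Matrix (aI × bI × bO) (aI × bI × bO) ℂ := fun i j =>
  ∑ k : aO, N (i.1, k, i.2.1, i.2.2) (j.1, k, j.2.1, j.2.2)

/-- Partial trace over `B_O`. -/
noncomputable def ptrBO (N : Matrix (aI × aO × bI × bO) (aI × aO × bI × bO) ℂ) :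
    Matrix (aI × aO × bI) (aI × aO × bI) ℂ := fun i j =>
  ∑ k : bO, N (i.1, i.2.1, i.2.2, k) (j.1, j.2.1, j.2.2, k)

/-- Partial trace over `A_O ⊗ B_O`. -/
noncomputable def ptrAOBO (N : Matrix (aI × aO × bI × bO) (aI × aO × bI × bO) ℂ) :
    Matrix (aI × bI) (aI × bI) ℂ := fun i j =>
  ∑ k : aO, ∑ l : bO, N (i.1, k, i.2, l) (j.1, k, j.2, l)

/-- `N` is the Choi matrix of a non-signaling channel. -/
structure MemNS (N : Matrix (aI × aO × bI × bO) (aI × aO × bI × bO) ℂ) : Prop where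
  posSemidef : N.PosSemidef
  trChannel : ptrAOBO N = 1
  nsA : ∀ i j : aI × bI × bO, ptrAO N i j =
    (if i.1 = j.1 then ((Fintype.card aI : ℂ))⁻¹ else 0) *
      ∑ m : aI, ptrAO N (m, i.2.1, i.2.2) (m, j.2.1, j.2.2)
  nsB : ∀ i j : aI × aO × bI, ptrBO N i j =
    (if i.2.2 = j.2.2 then ((Fintype.card bI : ℂ))⁻¹ else 0) *
      ∑ m : bI, ptrBO N (i.1, i.2.1, m) (j.1, j.2.1, m)

/-- `sup { ‖√N (W₀ - W₁) √N‖₁ : N ∈ NS }`. -/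
noncomputable def discrBound (W0 W1 : Matrix (aI × aO × bI × bO) (aI × aO × bI × bO) ℂ) : ℝ :=
  sSup { x : ℝ | ∃ N : Matrix (aI × aO × bI × bO) (aI × aO × bI × bO) ℂ, ∃ hN : MemNS N,
    x = traceNorm ((hN.posSemidef.1.eigenvectorUnitary.1 * Matrix.diagonal (fun i => ((Real.sqrt (hN.posSemidef.1.eigenvalues i) : ℝ) : ℂ)) * (star hN.posSemidef.1.eigenvectorUnitary : Matrix (aI × aO × bI × bO) (aI × aO × bI × bO) ℂ)) * (W0 - W1) * (hN.posSemidef.1.eigenvectorUnitary.1 * Matrix.diagonal (fun i => ((Real.sqrt (hN.posSemidef.1.eigenvalues i) : ℝ) : ℂ)) * (star hN.posSemidef.1.eigenvectorUnitary : Matrix (aI × aO × bI × bO) (aI × aO × bI × bO) ℂ))) }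

/-- The optimal probability of discriminating the process matrices `W0` and `W1`
over non-signaling strategies. -/
noncomputable def pSucc (W0 W1 : Matrix (aI × aO × bI × bO) (aI × aO × bI × bO) ℂ) : ℝ :=
  (1/2) * sSup { x : ℝ | ∃ S0 S1 : Matrix (aI × aO × bI × bO) (aI × aO × bI × bO) ℂ,
    S0.PosSemidef ∧ S1.PosSemidef ∧ MemNS (S0 + S1) ∧
    x = ((W0 * S0).trace + (W1 * S1).trace).re }

/-- `W` is a process matrix representing a quantum comb with causal order `A ≺ B`:
`W = W' ⊗ 1_{B_O}` with `tr_{B_I} W' = W'' ⊗ 1_{A_O}`. -/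
def MemCombAB (W : Matrix (aI × aO × bI × bO) (aI × aO × bI × bO) ℂ) : Prop :=
  IsProcessMatrix W ∧
  ∃ W' : Matrix (aI × aO × bI) (aI × aO × bI) ℂ,
    (∀ i j, W i j = (if i.2.2.2 = j.2.2.2 then 1 else 0) *
        W' (i.1, i.2.1, i.2.2.1) (j.1, j.2.1, j.2.2.1)) ∧
    ∃ W'' : Matrix aI aI ℂ, ∀ p q : aI × aO,
      (∑ k : bI, W' (p.1, p.2, k) (q.1, q.2, k)) = (if p.2 = q.2 then 1 else 0) * W'' p.1 q.1

/-- `W` is a process matrix representing a quantum comb with causal order `B ≺ A`: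
`W = W' ⊗ 1_{A_O}` (in the `A_O` slot) with `tr_{A_I} W' = W'' ⊗ 1_{B_O}`. -/
def MemCombBA (W : Matrix (aI × aO × bI × bO) (aI × aO × bI × bO) ℂ) : Prop :=
  IsProcessMatrix W ∧
  ∃ W' : Matrix (aI × bI × bO) (aI × bI × bO) ℂ,
    (∀ i j, W i j = (if i.2.1 = j.2.1 then 1 else 0) *
        W' (i.1, i.2.2.1, i.2.2.2) (j.1, j.2.2.1, j.2.2.2)) ∧
    ∃ W'' : Matrix bI bI ℂ, ∀ p q : bI × bO,
      (∑ k : aI, W' (k, p.1, p.2) (k, q.1, q.2)) = (if p.2 = q.2 then 1 else 0) * W'' p.1 q.1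

/-- `W` is a free process matrix: `W = ρ ⊗ 1_{A_O ⊗ B_O}` for a density operator `ρ`. -/
def MemFree (W : Matrix (aI × aO × bI × bO) (aI × aO × bI × bO) ℂ) : Prop :=
  ∃ ρ : Matrix (aI × bI) (aI × bI) ℂ, ρ.PosSemidef ∧ ρ.trace = 1 ∧
    ∀ i j, W i j = (if i.2.1 = j.2.1 ∧ i.2.2.2 = j.2.2.2 then 1 else 0) *
      ρ (i.1, i.2.2.1) (j.1, j.2.2.1)

/-- `W` is a causally separable process matrix. -/
def MemSep (W : Matrix (aI × aO × bI × bO) (aI × aO × bI × bO) ℂ) : Prop :=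
  ∃ p : ℝ, 0 ≤ p ∧ p ≤ 1 ∧ ∃ W1 W2 : Matrix (aI × aO × bI × bO) (aI × aO × bI × bO) ℂ,
    MemCombAB W1 ∧ MemCombBA W2 ∧ W = (p : ℂ) • W1 + ((1 - p : ℝ) : ℂ) • W2

/-- `(L0, L1)` is an adaptive tester for the causal order `A ≺ B`. -/
structure IsAdaptiveTester (L0 L1 : Matrix (aI × aO × bI × bO) (aI × aO × bI × bO) ℂ) :
    Prop where
  posSemidef0 : L0.PosSemidef
  posSemidef1 : L1.PosSemidef
  comb : ∃ J : Matrix (aI × aO) (aI × aO) ℂ, J.PosSemidef ∧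
    (∀ p q : aI, (∑ k : aO, J (p, k) (q, k)) = if p = q then 1 else 0) ∧
    ∀ i j : aI × aO × bI, ptrBO (L0 + L1) i j =
      (if i.2.2 = j.2.2 then 1 else 0) * J (i.1, i.2.1) (j.1, j.2.1)

/-- The optimal probability of discriminating `W0` and `W1` over adaptive testers. -/
noncomputable def pAdapt (W0 W1 : Matrix (aI × aO × bI × bO) (aI × aO × bI × bO) ℂ) : ℝ :=
  (1/2) * sSup { x : ℝ | ∃ L0 L1 : Matrix (aI × aO × bI × bO) (aI × aO × bI × bO) ℂ,
    IsAdaptiveTester L0 L1 ∧ x = ((W0 * L0).trace + (W1 * L1).trace).re }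


noncomputable section Aux

abbrev I2 := Fin 2 × Fin 2 × Fin 2 × Fin 2

def zR : Fin 2 → ℝ := fun k => if k = 0 then 1 else -1

def em (a b : Fin 2) : ℂ := if a = b then 1 else 0
def zm (a b : Fin 2) : ℂ := if a = b then (zR a : ℂ) else 0
def xm (a b : Fin 2) : ℂ := if a = b then 0 else 1

@[simp] lemma em00 : em 0 0 = 1 := by norm_num [em]
@[simp] lemma em01 : em 0 1 = 0 := by norm_num [em]
@[simp] lemma em10 : em 1 0 = 0 := by norm_num [em]
@[simp] lemma em11 : em 1 1 = 1 := by norm_num [em]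
@[simp] lemma zm00 : zm 0 0 = 1 := by norm_num [zm, zR]
@[simp] lemma zm01 : zm 0 1 = 0 := by norm_num [zm, zR]
@[simp] lemma zm10 : zm 1 0 = 0 := by norm_num [zm, zR]
@[simp] lemma zm11 : zm 1 1 = -1 := by norm_num [zm, zR]
@[simp] lemma xm00 : xm 0 0 = 0 := by norm_num [xm]
@[simp] lemma xm01 : xm 0 1 = 1 := by norm_num [xm]
@[simp] lemma xm10 : xm 1 0 = 1 := by norm_num [xm]
@[simp] lemma xm11 : xm 1 1 = 0 := by norm_num [xm]

def Umat : Matrix I2 I2 ℂ := fun i j =>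
  em i.1 j.1 * zm i.2.1 j.2.1 * zm i.2.2.1 j.2.2.1 * em i.2.2.2 j.2.2.2

def Vmat : Matrix I2 I2 ℂ := fun i j =>
  zm i.1 j.1 * em i.2.1 j.2.1 * xm i.2.2.1 j.2.2.1 * zm i.2.2.2 j.2.2.2

def rC : ℂ := (((Real.sqrt 2)⁻¹ : ℝ) : ℂ)

lemma rC_sq : rC * rC = (2:ℂ)⁻¹ := by
  rw [rC, ← Complex.ofReal_mul, ← mul_inv, Real.mul_self_sqrt (by norm_num)]
  push_cast; ring

def Wpm (ε : ℂ) : Matrix I2 I2 ℂ := (4:ℂ)⁻¹ • ((1 : Matrix I2 I2 ℂ) + (ε * rC) • (Umat + Vmat))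

lemma Wpm_apply (ε : ℂ) (i j : I2) :
    Wpm ε i j = (4:ℂ)⁻¹ * ((if i = j then 1 else 0) +
      ε * rC * (em i.1 j.1 * zm i.2.1 j.2.1 * zm i.2.2.1 j.2.2.1 * em i.2.2.2 j.2.2.2 +
        zm i.1 j.1 * em i.2.1 j.2.1 * xm i.2.2.1 j.2.2.1 * zm i.2.2.2 j.2.2.2)) := by
  simp [Wpm, Matrix.one_apply, Umat, Vmat, Matrix.add_apply, mul_assoc]
  ring

-- 2x2 sum lemmas
lemma sum_zm_diag : ∑ k : Fin 2, zm k k = 0 := by simp [Fin.sum_univ_two]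
lemma sum_ee (a b : Fin 2) : ∑ k : Fin 2, em a k * em k b = em a b := by
  fin_cases a <;> fin_cases b <;> simp [Fin.sum_univ_two]
lemma sum_zz (a b : Fin 2) : ∑ k : Fin 2, zm a k * zm k b = em a b := by
  fin_cases a <;> fin_cases b <;> simp [Fin.sum_univ_two]
lemma sum_xx (a b : Fin 2) : ∑ k : Fin 2, xm a k * xm k b = em a b := by
  fin_cases a <;> fin_cases b <;> simp [Fin.sum_univ_two]
lemma sum_zx_anti (a b : Fin 2) :
    (∑ k : Fin 2, zm a k * xm k b) = -∑ k : Fin 2, xm a k * zm k b := by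
  fin_cases a <;> fin_cases b <;> simp [Fin.sum_univ_two]

lemma mul4 (a b c d a' b' c' d' : Fin 2 → Fin 2 → ℂ) (i j : I2) :
    (∑ k : I2, (a i.1 k.1 * b i.2.1 k.2.1 * c i.2.2.1 k.2.2.1 * d i.2.2.2 k.2.2.2) *
      (a' k.1 j.1 * b' k.2.1 j.2.1 * c' k.2.2.1 j.2.2.1 * d' k.2.2.2 j.2.2.2))
    = (∑ k, a i.1 k * a' k j.1) * (∑ k, b i.2.1 k * b' k j.2.1) *
      (∑ k, c i.2.2.1 k * c' k j.2.2.1) * (∑ k, d i.2.2.2 k * d' k j.2.2.2) := by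
  simp only [Fintype.sum_prod_type, Fin.sum_univ_two]; ring

lemma em_prod_eq_one (i j : I2) :
    em i.1 j.1 * em i.2.1 j.2.1 * em i.2.2.1 j.2.2.1 * em i.2.2.2 j.2.2.2
      = (1 : Matrix I2 I2 ℂ) i j := by
  obtain ⟨i1,i2,i3,i4⟩ := i; obtain ⟨j1,j2,j3,j4⟩ := j
  simp only [Matrix.one_apply, em, Prod.mk.injEq]
  split_ifs with h <;> simp_all

lemma UU : Umat * Umat = 1 := by
  ext i j
  rw [Matrix.mul_apply]
  show (∑ k : I2, (em i.1 k.1 * zm i.2.1 k.2.1 * zm i.2.2.1 k.2.2.1 * em i.2.2.2 k.2.2.2) *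
      (em k.1 j.1 * zm k.2.1 j.2.1 * zm k.2.2.1 j.2.2.1 * em k.2.2.2 j.2.2.2)) = _
  rw [mul4, sum_ee, sum_zz, sum_zz, sum_ee, ← em_prod_eq_one i j]

lemma VV : Vmat * Vmat = 1 := by
  ext i j
  rw [Matrix.mul_apply]
  show (∑ k : I2, (zm i.1 k.1 * em i.2.1 k.2.1 * xm i.2.2.1 k.2.2.1 * zm i.2.2.2 k.2.2.2) *
      (zm k.1 j.1 * em k.2.1 j.2.1 * xm k.2.2.1 j.2.2.1 * zm k.2.2.2 j.2.2.2)) = _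
  rw [mul4, sum_zz, sum_ee, sum_xx, sum_zz, ← em_prod_eq_one i j]

lemma UVVU : Umat * Vmat + Vmat * Umat = 0 := by
  ext i j
  rw [Matrix.add_apply, Matrix.mul_apply, Matrix.mul_apply]
  have h1 : (∑ k : I2, Umat i k * Vmat k j)
      = (∑ k, em i.1 k * zm k j.1) * (∑ k, zm i.2.1 k * em k j.2.1) *
        (∑ k, zm i.2.2.1 k * xm k j.2.2.1) * (∑ k, em i.2.2.2 k * zm k j.2.2.2) := by
    rw [← mul4]; rfl
  have h2 : (∑ k : I2, Vmat i k * Umat k j)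
      = (∑ k, zm i.1 k * em k j.1) * (∑ k, em i.2.1 k * zm k j.2.1) *
        (∑ k, xm i.2.2.1 k * zm k j.2.2.1) * (∑ k, zm i.2.2.2 k * em k j.2.2.2) := by
    rw [← mul4]; rfl
  rw [h1, h2, sum_zx_anti]
  have hez : ∀ a b : Fin 2, (∑ k, em a k * zm k b) = zm a b := by
    intro a b; fin_cases a <;> fin_cases b <;> simp [Fin.sum_univ_two]
  have hze : ∀ a b : Fin 2, (∑ k, zm a k * em k b) = zm a b := by
    intro a b; fin_cases a <;> fin_cases b <;> simp [Fin.sum_univ_two]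
  simp only [hez, hze]
  simp only [Matrix.zero_apply]; ring


lemma star_em (a b : Fin 2) : star (em a b) = em b a := by
  fin_cases a <;> fin_cases b <;> simp
lemma star_zm (a b : Fin 2) : star (zm a b) = zm b a := by
  fin_cases a <;> fin_cases b <;> simp
lemma star_xm (a b : Fin 2) : star (xm a b) = xm b a := by
  fin_cases a <;> fin_cases b <;> simp

lemma U_herm : Umat.IsHermitian := by
  ext i j
  simp only [Matrix.conjTranspose_apply, Umat, star_mul']
  rw [star_em, star_zm, star_zm, star_em]

lemma V_herm : Vmat.IsHermitian := by
  ext i j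
  simp only [Matrix.conjTranspose_apply, Vmat, star_mul']
  rw [star_zm, star_em, star_xm, star_zm]

lemma Ssq : (Umat + Vmat) * (Umat + Vmat) = (2:ℂ) • (1 : Matrix I2 I2 ℂ) := by
  rw [add_mul, mul_add, mul_add, UU, VV,
    show (1:Matrix I2 I2 ℂ) + Umat * Vmat + (Vmat * Umat + 1)
      = (Umat * Vmat + Vmat * Umat) + (1 + 1) from by abel, UVVU]
  rw [zero_add]
  module

lemma Wpm_posSemidef (ε : ℂ) (hε : ε = 1 ∨ ε = -1) : (Wpm ε).PosSemidef := by
  set c : ℂ := (((Real.sqrt 8)⁻¹ : ℝ) : ℂ) with hc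
  set M : Matrix I2 I2 ℂ := (1 : Matrix I2 I2 ℂ) + (ε * rC) • (Umat + Vmat) with hM
  have hMherm : Mᴴ = M := by
    rw [hM, Matrix.conjTranspose_add, Matrix.conjTranspose_smul, Matrix.conjTranspose_add,
      Matrix.conjTranspose_one, U_herm.eq, V_herm.eq]
    congr 1
    congr 1
    rw [star_mul']
    have h1 : star rC = rC := by rw [rC, RCLike.star_def, Complex.conj_ofReal]
    have h2 : star ε = ε := by rcases hε with h | h <;> rw [h] <;> simp
    rw [h1, h2, mul_comm]
  have hεsq : ε * ε = 1 := by rcases hε with h | h <;> rw [h] <;> ring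
  have hc2 : (ε * rC) * (ε * rC) = (2:ℂ)⁻¹ := by
    rw [show ε * rC * (ε * rC) = (ε * ε) * (rC * rC) from by ring, hεsq, rC_sq, one_mul]
  have hMsq : M * M = (2:ℂ) • M := by
    calc M * M = 1 + (ε * rC) • (Umat + Vmat) + ((ε * rC) • (Umat + Vmat) +
        ((ε * rC) * (ε * rC)) • ((Umat + Vmat) * (Umat + Vmat))) := by
          simp only [hM, add_mul, mul_add, one_mul, mul_one, Matrix.smul_mul, Matrix.mul_smul,
            smul_smul, smul_add]
          module
      _ = (2:ℂ) • M := by rw [Ssq, hc2, hM]; module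
  have key : ((c • M)ᴴ * (c • M)) = Wpm ε := by
    rw [Matrix.conjTranspose_smul, Matrix.smul_mul, Matrix.mul_smul, hMherm, hMsq, smul_smul,
      smul_smul]
    have : star c * c * (2:ℂ) = (4:ℂ)⁻¹ := by
      rw [hc, RCLike.star_def, Complex.conj_ofReal, ← Complex.ofReal_mul, ← mul_inv,
        Real.mul_self_sqrt (by norm_num)]
      norm_num
    rw [this, Wpm]
  exact key ▸ Matrix.posSemidef_conjTranspose_mul_self _

section PMconds
set_option maxHeartbeats 1000000

lemma condA_Wpm (ε : ℂ) : rAIAO (Wpm ε) = rAIAOBO (Wpm ε) := by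
  funext i j
  obtain ⟨i1,i2,i3,i4⟩ := i; obtain ⟨j1,j2,j3,j4⟩ := j
  simp only [rAIAO, rAIAOBO, Wpm_apply, Fin.sum_univ_two, Fintype.card_fin, Nat.cast_ofNat,
    Prod.mk.injEq, em00, em01, em10, em11, zm00, zm01, zm10, zm11, xm00, xm01, xm10, xm11,
    em, zm, xm, zR]
  by_cases h1 : i1 = j1 <;> by_cases h2 : i2 = j2 <;> by_cases h3 : i3 = j3 <;>
    by_cases h4 : i4 = j4 <;>
    simp only [h1, h2, h3, h4, if_true, if_false, and_true, and_false, true_and, false_and,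
      and_self, ite_true, ite_false, if_pos, if_neg, not_false_iff] <;> ring_nf <;> try simp_all
  all_goals ring_nf
lemma condB_Wpm (ε : ℂ) : rBIBO (Wpm ε) = rAOBIBO (Wpm ε) := by
  funext i j
  obtain ⟨i1,i2,i3,i4⟩ := i; obtain ⟨j1,j2,j3,j4⟩ := j
  simp only [rBIBO, rAOBIBO, Wpm_apply, Fin.sum_univ_two, Fintype.card_fin, Nat.cast_ofNat,
    Prod.mk.injEq, em00, em01, em10, em11, zm00, zm01, zm10, zm11, xm00, xm01, xm10, xm11,
    em, zm, xm, zR]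
  by_cases h1 : i1 = j1 <;> by_cases h2 : i2 = j2 <;> by_cases h3 : i3 = j3 <;>
    by_cases h4 : i4 = j4 <;>
    simp only [h1, h2, h3, h4, if_true, if_false, and_true, and_false, true_and, false_and,
      and_self, ite_true, ite_false, if_pos, if_neg, not_false_iff] <;> ring_nf <;> try simp_all
  all_goals ring_nf

lemma condAB_Wpm (ε : ℂ) : Wpm ε = rBO (Wpm ε) + rAO (Wpm ε) - rAOBO (Wpm ε) := by
  funext i j
  obtain ⟨i1,i2,i3,i4⟩ := i; obtain ⟨j1,j2,j3,j4⟩ := j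
  simp only [rBO, rAO, rAOBO, Matrix.sub_apply, Matrix.add_apply, Wpm_apply, Fin.sum_univ_two,
    Fintype.card_fin, Nat.cast_ofNat,
    Prod.mk.injEq, em00, em01, em10, em11, zm00, zm01, zm10, zm11, xm00, xm01, xm10, xm11,
    em, zm, xm, zR]
  by_cases h1 : i1 = j1 <;> by_cases h2 : i2 = j2 <;> by_cases h3 : i3 = j3 <;>
    by_cases h4 : i4 = j4 <;>
    simp only [h1, h2, h3, h4, if_true, if_false, and_true, and_false, true_and, false_and,
      and_self, ite_true, ite_false, if_pos, if_neg, not_false_iff] <;> ring_nf <;> try simp_all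
  all_goals ring_nf

lemma trace_Wpm (ε : ℂ) : (Wpm ε).trace = (Fintype.card (Fin 2) : ℂ) * (Fintype.card (Fin 2) : ℂ) := by
  simp only [Matrix.trace, Matrix.diag, Fintype.sum_prod_type, Fin.sum_univ_two, Wpm_apply,
    Fintype.card_fin, Nat.cast_ofNat,
    em00, em01, em10, em11, zm00, zm01, zm10, zm11, xm00, xm01, xm10, xm11]
  ring_nf
  simp

lemma isPM_Wpm (ε : ℂ) (hε : ε = 1 ∨ ε = -1) : IsProcessMatrix (Wpm ε) :=
  ⟨Wpm_posSemidef ε hε, condA_Wpm ε, condB_Wpm ε, condAB_Wpm ε, trace_Wpm ε⟩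
end PMconds

end Aux


section Witness
set_option maxHeartbeats 1000000

@[simp] lemma zR0 : zR 0 = 1 := by norm_num [zR]
@[simp] lemma zR1 : zR 1 = -1 := by norm_num [zR]
@[simp] lemma finadd0 : (0 : Fin 2) + 1 = 1 := rfl
@[simp] lemma finadd1 : (1 : Fin 2) + 1 = 0 := rfl

noncomputable def flip3 (i : I2) : I2 := (i.1, i.2.1, i.2.2.1 + 1, i.2.2.2)

noncomputable def fF (W : Matrix I2 I2 ℂ) : ℂ := ∑ i : I2, ((zR i.2.1 * zR i.2.2.1 : ℝ) : ℂ) * W i i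
noncomputable def gF (W : Matrix I2 I2 ℂ) : ℂ := ∑ i : I2, ((zR i.1 * zR i.2.2.2 : ℝ) : ℂ) * W i (flip3 i)

lemma fF_Wpm (ε : ℂ) : fF (Wpm ε) = 4 * ε * rC := by
  simp only [fF, Fintype.sum_prod_type, Fin.sum_univ_two, Wpm_apply, flip3, zR0, zR1,
    em00, em01, em10, em11, zm00, zm01, zm10, zm11, xm00, xm01, xm10, xm11, Prod.mk.injEq]
  norm_num
  ring

lemma gF_Wpm (ε : ℂ) : gF (Wpm ε) = 4 * ε * rC := by
  simp only [gF, Fintype.sum_prod_type, Fin.sum_univ_two, Wpm_apply, flip3, zR0, zR1, finadd0,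
    finadd1, em00, em01, em10, em11, zm00, zm01, zm10, zm11, xm00, xm01, xm10, xm11,
    Prod.mk.injEq]
  norm_num
  ring

lemma fF_mix (p q : ℂ) (A B : Matrix I2 I2 ℂ) :
    fF (p • A + q • B) = p * fF A + q * fF B := by
  simp only [fF, Matrix.add_apply, Matrix.smul_apply, smul_eq_mul, mul_add, Finset.mul_sum,
    Finset.sum_add_distrib]
  congr 1 <;> apply Finset.sum_congr rfl <;> intros <;> ring

lemma gF_mix (p q : ℂ) (A B : Matrix I2 I2 ℂ) :
    gF (p • A + q • B) = p * gF A + q * gF B := by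
  simp only [gF, Matrix.add_apply, Matrix.smul_apply, smul_eq_mul, mul_add, Finset.mul_sum,
    Finset.sum_add_distrib]
  congr 1 <;> apply Finset.sum_congr rfl <;> intros <;> ring

lemma gF_combAB {W : Matrix I2 I2 ℂ} (hW : MemCombAB W) : gF W = 0 := by
  obtain ⟨-, W', hW', -⟩ := hW
  simp only [gF, hW', flip3, Fintype.sum_prod_type, Fin.sum_univ_two, zR0, zR1, finadd0,
    finadd1, Prod.mk.injEq]
  norm_num

lemma fF_combBA {W : Matrix I2 I2 ℂ} (hW : MemCombBA W) : fF W = 0 := by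
  obtain ⟨-, W', hW', -⟩ := hW
  simp only [fF, hW', Fintype.sum_prod_type, Fin.sum_univ_two, zR0, zR1, Prod.mk.injEq]
  norm_num
  ring

end Witness


section Bounds
set_option maxHeartbeats 1000000

lemma star_single (i : I2) (x : ℂ) : star (Pi.single i x : I2 → ℂ) = Pi.single i (star x) :=
  funext fun a => by by_cases h : a = i <;> simp [Pi.single_apply, h]

lemma diag_re_nonneg {M : Matrix I2 I2 ℂ} (h : M.PosSemidef) (i : I2) : 0 ≤ (M i i).re := by
  have := h.re_dotProduct_nonneg (Pi.single i 1)
  simpa [star_single, dotProduct, Matrix.mulVec_single, Pi.single_apply, ite_mul,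
    Finset.sum_ite_eq'] using this

lemma psd_pair {M : Matrix I2 I2 ℂ} (hM : M.PosSemidef) (i j : I2) (hij : i ≠ j) (c : ℝ)
    (hc : c = 1 ∨ c = -1) :
    c * (M i j).re + c * (M j i).re ≤ (M i i).re + (M j j).re := by
  have h := hM.re_dotProduct_nonneg (Pi.single i 1 + Pi.single j (-(c:ℂ)))
  have hcompute : star (Pi.single i (1:ℂ) + Pi.single j (-(c:ℂ))) ⬝ᵥ
      (M *ᵥ (Pi.single i 1 + Pi.single j (-(c:ℂ))))
      = M i i + M i j * (-(c:ℂ)) + (-(c:ℂ)) * (M j i + M j j * (-(c:ℂ))) := by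
    rw [star_add, star_single, star_single, Matrix.mulVec_add, Matrix.mulVec_single,
      Matrix.mulVec_single, add_dotProduct, single_dotProduct, single_dotProduct]
    simp only [Pi.add_apply, star_one, one_mul, RCLike.star_def, map_neg, Complex.conj_ofReal,
      Pi.smul_apply, Matrix.col_apply, op_smul_eq_mul]
    ring
  rw [hcompute] at h
  have h2 : (0:ℝ) ≤ (M i i + M i j * (-(c:ℂ)) + (-(c:ℂ)) * (M j i + M j j * (-(c:ℂ)))).re := h
  have hre : (M i i + M i j * (-(c:ℂ)) + (-(c:ℂ)) * (M j i + M j j * (-(c:ℂ)))).re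
      = (M i i).re - c * (M i j).re - c * (M j i).re + c * c * (M j j).re := by
    simp [Complex.add_re, Complex.mul_re, Complex.neg_re, Complex.ofReal_re, Complex.ofReal_im]
    ring
  rw [hre] at h2
  have hc2 : c * c = 1 := by rcases hc with h' | h' <;> rw [h'] <;> norm_num
  rw [hc2, one_mul] at h2
  linarith

lemma zRsq (a : Fin 2) : zR a * zR a = 1 := by fin_cases a <;> norm_num
lemma zR_pm (a b : Fin 2) : zR a * zR b = 1 ∨ zR a * zR b = -1 := by
  fin_cases a <;> fin_cases b <;> norm_num

lemma fF_re (M : Matrix I2 I2 ℂ) : (fF M).re = ∑ i : I2, (zR i.2.1 * zR i.2.2.1) * (M i i).re := by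
  rw [fF, Complex.re_sum]
  exact Finset.sum_congr rfl fun i _ => by rw [Complex.re_ofReal_mul]

lemma gF_re (M : Matrix I2 I2 ℂ) :
    (gF M).re = ∑ i : I2, (zR i.1 * zR i.2.2.2) * (M i (flip3 i)).re := by
  rw [gF, Complex.re_sum]
  exact Finset.sum_congr rfl fun i _ => by rw [Complex.re_ofReal_mul]

lemma abs_fF_le {M : Matrix I2 I2 ℂ} (h : M.PosSemidef) (ht : M.trace = 4) :
    |(fF M).re| ≤ 4 := by
  rw [fF_re]
  have h1 : ∀ i : I2, |(zR i.2.1 * zR i.2.2.1) * (M i i).re| = (M i i).re := by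
    intro i
    rw [abs_mul]
    rcases zR_pm i.2.1 i.2.2.1 with h' | h' <;>
      rw [h'] <;> simp [abs_of_nonneg (diag_re_nonneg h i)]
  calc |∑ i : I2, (zR i.2.1 * zR i.2.2.1) * (M i i).re|
      ≤ ∑ i : I2, |(zR i.2.1 * zR i.2.2.1) * (M i i).re| := Finset.abs_sum_le_sum_abs _ _
    _ = ∑ i : I2, (M i i).re := by simp only [h1]
    _ = (M.trace).re := by rw [Matrix.trace, Complex.re_sum]; rfl
    _ = 4 := by rw [ht]; norm_num

lemma flip3_ne (i : I2) : i ≠ flip3 i := by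
  obtain ⟨i1,i2,i3,i4⟩ := i
  simp only [flip3, Prod.mk.injEq, ne_eq, not_and]
  intro _ _ h
  exact absurd h (by fin_cases i3 <;> decide)

lemma sum_flip3 (M : Matrix I2 I2 ℂ) :
    ∑ i : I2, (M (flip3 i) (flip3 i)).re = ∑ i : I2, (M i i).re := by
  simp only [Fintype.sum_prod_type, Fin.sum_univ_two, flip3, finadd0, finadd1]
  ring

lemma abs_gF_le {M : Matrix I2 I2 ℂ} (h : M.PosSemidef) (ht : M.trace = 4) :
    |(gF M).re| ≤ 4 := by
  have htr : ∑ i : I2, (M i i).re = 4 := by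
    have : (M.trace).re = 4 := by rw [ht]; norm_num
    rw [← this, Matrix.trace, Complex.re_sum]; rfl
  have key : ∀ s : ℝ, s = 1 ∨ s = -1 → s * (gF M).re ≤ 4 := by
    intro s hs
    rw [gF_re, Finset.mul_sum]
    have hbound : ∀ i : I2, s * ((zR i.1 * zR i.2.2.2) * (M i (flip3 i)).re)
        ≤ ((M i i).re + (M (flip3 i) (flip3 i)).re) / 2 := by
      intro i
      have hherm : (M (flip3 i) i).re = (M i (flip3 i)).re := by
        have := congrFun (congrFun h.1 (flip3 i)) i
        rw [Matrix.conjTranspose_apply] at this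
        rw [← this, Complex.star_def, Complex.conj_re]
      have hpm : s * (zR i.1 * zR i.2.2.2) = 1 ∨ s * (zR i.1 * zR i.2.2.2) = -1 := by
        rcases hs with h' | h' <;> rcases zR_pm i.1 i.2.2.2 with h'' | h'' <;>
          rw [h', h''] <;> norm_num
      have := psd_pair h i (flip3 i) (flip3_ne i) (s * (zR i.1 * zR i.2.2.2)) hpm
      rw [hherm] at this
      nlinarith [this]
    calc ∑ i : I2, s * ((zR i.1 * zR i.2.2.2) * (M i (flip3 i)).re)
        ≤ ∑ i : I2, ((M i i).re + (M (flip3 i) (flip3 i)).re) / 2 :=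
          Finset.sum_le_sum fun i _ => hbound i
      _ = 4 := by
          have hsplit : ∑ i : I2, ((M i i).re + (M (flip3 i) (flip3 i)).re) / 2
              = ((∑ i : I2, (M i i).re) + ∑ i : I2, (M (flip3 i) (flip3 i)).re) / 2 := by
            rw [← Finset.sum_add_distrib, ← Finset.sum_div]
          rw [hsplit, sum_flip3, htr]
          norm_num
  have h1 := key 1 (Or.inl rfl)
  have h2 := key (-1) (Or.inr rfl)
  rw [one_mul] at h1
  rw [abs_le]; constructor <;> nlinarith

end Bounds


section Final
set_option maxHeartbeats 1000000

lemma Wzero_posSemidef : (Wpm 0).PosSemidef := by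
  have key : (((2:ℂ)⁻¹ • (1 : Matrix I2 I2 ℂ))ᴴ * ((2:ℂ)⁻¹ • (1 : Matrix I2 I2 ℂ))) = Wpm 0 := by
    rw [Wpm]
    simp [Matrix.conjTranspose_smul, Matrix.smul_mul, Matrix.mul_smul, smul_smul]
    norm_num
  exact key ▸ Matrix.posSemidef_conjTranspose_mul_self _

lemma isPM_Wzero : IsProcessMatrix (Wpm 0) :=
  ⟨Wzero_posSemidef, condA_Wpm 0, condB_Wpm 0, condAB_Wpm 0, trace_Wpm 0⟩

lemma Wzero_apply (i j : I2) : Wpm 0 i j = if i = j then (4:ℂ)⁻¹ else 0 := by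
  rw [Wpm_apply]
  split_ifs <;> ring

lemma memCombAB_Wzero : MemCombAB (Wpm 0) := by
  refine ⟨isPM_Wzero, (fun i j => if i = j then (4:ℂ)⁻¹ else 0), fun i j => ?_,
    (fun a b => if a = b then (2:ℂ)⁻¹ else 0), fun p q => ?_⟩
  · obtain ⟨i1,i2,i3,i4⟩ := i; obtain ⟨j1,j2,j3,j4⟩ := j
    rw [Wzero_apply]
    simp only [Prod.mk.injEq]
    by_cases h1 : i1 = j1 <;> by_cases h2 : i2 = j2 <;> by_cases h3 : i3 = j3 <;>
      by_cases h4 : i4 = j4 <;> simp [h1, h2, h3, h4]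
  · obtain ⟨p1,p2⟩ := p; obtain ⟨q1,q2⟩ := q
    simp only [Fin.sum_univ_two, Prod.mk.injEq]
    by_cases h1 : p1 = q1 <;> by_cases h2 : p2 = q2 <;> simp [h1, h2] <;> ring

lemma memCombBA_Wzero : MemCombBA (Wpm 0) := by
  refine ⟨isPM_Wzero, (fun i j => if i = j then (4:ℂ)⁻¹ else 0), fun i j => ?_,
    (fun a b => if a = b then (2:ℂ)⁻¹ else 0), fun p q => ?_⟩
  · obtain ⟨i1,i2,i3,i4⟩ := i; obtain ⟨j1,j2,j3,j4⟩ := j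
    rw [Wzero_apply]
    simp only [Prod.mk.injEq]
    by_cases h1 : i1 = j1 <;> by_cases h2 : i2 = j2 <;> by_cases h3 : i3 = j3 <;>
      by_cases h4 : i4 = j4 <;> simp [h1, h2, h3, h4]
  · obtain ⟨p1,p2⟩ := p; obtain ⟨q1,q2⟩ := q
    simp only [Fin.sum_univ_two, Prod.mk.injEq]
    by_cases h1 : p1 = q1 <;> by_cases h2 : p2 = q2 <;> simp [h1, h2] <;> ring

lemma memSep_Wzero : MemSep (Wpm 0) := by
  refine ⟨1, zero_le_one, le_refl 1, Wpm 0, Wpm 0, memCombAB_Wzero, memCombBA_Wzero, ?_⟩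
  norm_num

lemma mix_eq : (((1:ℝ)/2 : ℝ) : ℂ) • Wpm 1 + ((1 - (1:ℝ)/2 : ℝ) : ℂ) • Wpm (-1) = Wpm 0 := by
  have h1 : (((1:ℝ)/2 : ℝ) : ℂ) = (2:ℂ)⁻¹ := by norm_num
  have h2 : ((1 - (1:ℝ)/2 : ℝ) : ℂ) = (2:ℂ)⁻¹ := by norm_num
  rw [h1, h2, Wpm, Wpm, Wpm]
  module

lemma sqrt_two_facts : (1:ℝ) < Real.sqrt 2 ∧ 2 * (Real.sqrt 2)⁻¹ = Real.sqrt 2 := by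
  have hpos : (0:ℝ) < Real.sqrt 2 := Real.sqrt_pos.mpr (by norm_num)
  have hsq : Real.sqrt 2 * Real.sqrt 2 = 2 := Real.mul_self_sqrt (by norm_num)
  constructor
  · nlinarith
  · field_simp
    rw [sq, hsq]

lemma not_memSep_Wpm (ε : ℂ) (hε : ε = 1 ∨ ε = -1) : ¬ MemSep (Wpm ε) := by
  rintro ⟨p, hp0, hp1, WA, WB, hAB, hBA, hEq⟩
  have trA : WA.trace = 4 := by
    have h := hAB.1.traceEq
    simp at h
    rw [h]; norm_num
  have trB : WB.trace = 4 := by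
    have h := hBA.1.traceEq
    simp at h
    rw [h]; norm_num
  have hfA := abs_fF_le hAB.1.posSemidef trA
  have hgB := abs_gF_le hBA.1.posSemidef trB
  -- equations
  have h1 : (4:ℂ) * ε * rC = (p:ℂ) * fF WA := by
    rw [← fF_Wpm ε, hEq, fF_mix, fF_combBA hBA, mul_zero, add_zero]
  have h2 : (4:ℂ) * ε * rC = ((1 - p : ℝ):ℂ) * gF WB := by
    rw [← gF_Wpm ε, hEq, gF_mix, gF_combAB hAB, mul_zero, zero_add]
  -- real parts
  have hre1 : p * (fF WA).re = 4 * ε.re * (Real.sqrt 2)⁻¹ := by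
    have := congrArg Complex.re h1
    rw [Complex.re_ofReal_mul] at this
    rw [← this]
    simp [rC, Complex.mul_re, Complex.ofReal_re, Complex.ofReal_im]
    rcases hε with h | h <;> rw [h] <;> simp
    all_goals field_simp
    all_goals rw [Real.sq_sqrt (by norm_num)]
  have hre2 : (1 - p) * (gF WB).re = 4 * ε.re * (Real.sqrt 2)⁻¹ := by
    have := congrArg Complex.re h2
    rw [Complex.re_ofReal_mul] at this
    rw [← this]
    simp [rC, Complex.mul_re, Complex.ofReal_re, Complex.ofReal_im]
    rcases hε with h | h <;> rw [h] <;> simp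
    all_goals field_simp
    all_goals rw [Real.sq_sqrt (by norm_num)]
  have hεre : ε.re = 1 ∨ ε.re = -1 := by
    rcases hε with h | h <;> rw [h] <;> simp
  obtain ⟨hgt1, hdbl⟩ := sqrt_two_facts
  have hpos : (0:ℝ) < Real.sqrt 2 := by linarith
  have hinv : (0:ℝ) < (Real.sqrt 2)⁻¹ := by positivity
  have hfA' := abs_le.mp hfA
  have hgB' := abs_le.mp hgB
  have hp' : (Real.sqrt 2)⁻¹ ≤ p := by
    rcases hεre with h | h <;> rw [h] at hre1 <;> nlinarith [hfA'.1, hfA'.2]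
  have hq' : (Real.sqrt 2)⁻¹ ≤ 1 - p := by
    rcases hεre with h | h <;> rw [h] at hre2 <;> nlinarith [hgB'.1, hgB'.2]
  nlinarith [hp', hq', hgt1, hdbl]

end Final

/-- With all four spaces equal to `ℂ²`, the set of causally
non-separable process matrices is not convex: there exist causally non-separable
process matrices whose convex combination is a causally separable process matrix. -/
theorem statement14 :
    ∃ (W1 W2 : Matrix (Fin 2 × Fin 2 × Fin 2 × Fin 2) (Fin 2 × Fin 2 × Fin 2 × Fin 2) ℂ)
      (p : ℝ),
      IsProcessMatrix W1 ∧ ¬ MemSep W1 ∧ IsProcessMatrix W2 ∧ ¬ MemSep W2 ∧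
      0 ≤ p ∧ p ≤ 1 ∧
      IsProcessMatrix ((p : ℂ) • W1 + ((1 - p : ℝ) : ℂ) • W2) ∧
      MemSep ((p : ℂ) • W1 + ((1 - p : ℝ) : ℂ) • W2) := by
  refine ⟨Wpm 1, Wpm (-1), (1:ℝ)/2, isPM_Wpm 1 (Or.inl rfl), not_memSep_Wpm 1 (Or.inl rfl),
    isPM_Wpm (-1) (Or.inr rfl), not_memSep_Wpm (-1) (Or.inr rfl), by norm_num, by norm_num,
    ?_, ?_⟩
  · rw [mix_eq]; exact isPM_Wzero
  · rw [mix_eq]; exact memSep_Wzero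

end ProcessMatrices
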